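/- If P ≤ Q holds in the stable partition-relation pair induced by partial bisimilarity and some state of Q has an a-transition (a ∈ A) into class R, then every state of Q has an a-transition into bb(R); moreover if a ∈ B then every state of the little brother P has an a-transition into lb(R). (Instantiation of stability conditions c and d for the canonical pair.) -/
import Mathlib


variable {S A : Type*}

/-- R is a partial bisimulation w.r.t. the bisimulation action set B. -/
def IsPB (tm : S → Prop) (tr : S → A → S → Prop) (B : Set A)
    (R : S → S → Prop) : Prop :=
  ∀ p q, R p q →
    (tm p → tm q) ∧
    (∀ a p', tr p a p' → ∃ q', tr q a q' ∧ R p' q') ∧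
    (∀ b q', b ∈ B → tr q b q' → ∃ p', tr p b p' ∧ R p' q')

/-- The partial bisimilarity preorder ≤_B. -/
def PbLe (tm : S → Prop) (tr : S → A → S → Prop) (B : Set A) (p q : S) : Prop :=
  ∃ R, IsPB tm tr B R ∧ R p q

/-- R is a simulation. -/
def IsSim (tm : S → Prop) (tr : S → A → S → Prop) (R : S → S → Prop) : Prop :=
  ∀ p q, R p q →
    (tm p → tm q) ∧
    (∀ a p', tr p a p' → ∃ q', tr q a q' ∧ R p' q')

/-- Strong similarity preorder. -/
def SimLe (tm : S → Prop) (tr : S → A → S → Prop) (p q : S) : Prop :=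
  ∃ R, IsSim tm tr R ∧ R p q

/-- R is a bisimulation: R and its inverse are simulations. -/
def IsBisim (tm : S → Prop) (tr : S → A → S → Prop) (R : S → S → Prop) : Prop :=
  IsSim tm tr R ∧ IsSim tm tr (fun p q => R q p)

/-- Strong bisimilarity. -/
def Bisimilar (tm : S → Prop) (tr : S → A → S → Prop) (p q : S) : Prop :=
  ∃ R, IsBisim tm tr R ∧ R p q

/-- A strong bisimulation: a symmetric relation matching termination and transitions. -/
def IsStrongBisim (tm : S → Prop) (tr : S → A → S → Prop) (R : S → S → Prop) : Prop :=
  Symmetric R ∧ ∀ p q, R p q →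
    (tm p ↔ tm q) ∧
    (∀ a p', tr p a p' → ∃ q', tr q a q' ∧ R p' q')

/-- P is a partition of S: nonempty, covering, pairwise-disjoint classes. -/
def IsPartition' (P : Set (Set S)) : Prop :=
  (∀ Q ∈ P, Q.Nonempty) ∧ (∀ s : S, ∃ Q ∈ P, s ∈ Q) ∧
  (∀ Q ∈ P, ∀ R ∈ P, (Q ∩ R).Nonempty → Q = R)

/-- Partition-relation pair: a partition with a partial order on its classes. -/
def IsPRP (P : Set (Set S)) (le : Set S → Set S → Prop) : Prop :=
  IsPartition' P ∧
  (∀ Q R, le Q R → Q ∈ P ∧ R ∈ P) ∧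
  (∀ Q ∈ P, le Q Q) ∧
  (∀ Q R, le Q R → le R Q → Q = R) ∧
  (∀ Q R T, le Q R → le R T → le Q T)

/-- Every state of P has an a-transition into X. -/
def AllTr (tr : S → A → S → Prop) (a : A) (P X : Set S) : Prop :=
  ∀ p ∈ P, ∃ x ∈ X, tr p a x

/-- Some state of P has an a-transition into X. -/
def ExTr (tr : S → A → S → Prop) (a : A) (P X : Set S) : Prop :=
  ∃ p ∈ P, ∃ x ∈ X, tr p a x

/-- bb(R): union of all big brother classes of R. -/
def bigBro (P : Set (Set S)) (le : Set S → Set S → Prop) (R : Set S) : Set S :=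
  {x | ∃ Q ∈ P, le R Q ∧ x ∈ Q}

/-- lb(R): union of all little brother classes of R. -/
def litBro (P : Set (Set S)) (le : Set S → Set S → Prop) (R : Set S) : Set S :=
  {x | ∃ Q ∈ P, le Q R ∧ x ∈ Q}

/-- Stability of a partition-relation pair (Definition of stability conditions a-d). -/
def IsStable (tm : S → Prop) (tr : S → A → S → Prop) (B : Set A)
    (P : Set (Set S)) (le : Set S → Set S → Prop) : Prop :=
  (∀ Q ∈ P, (∀ q ∈ Q, tm q) ∨ (∀ q ∈ Q, ¬ tm q)) ∧
  (∀ Q R, le Q R → (∀ q ∈ Q, tm q) → (∀ r ∈ R, tm r)) ∧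
  (∀ Q Q' R, R ∈ P → le Q Q' → ∀ a, ExTr tr a Q R → AllTr tr a Q' (bigBro P le R)) ∧
  (∀ Q Q' R, R ∈ P → le Q Q' → ∀ b ∈ B, ExTr tr b Q' R → AllTr tr b Q (litBro P le R))

/-- The order ◁ on partition-relation pairs. -/
def Lhd (P₁ : Set (Set S)) (le₁ : Set S → Set S → Prop)
    (P₂ : Set (Set S)) (le₂ : Set S → Set S → Prop) : Prop :=
  ∀ Q R, le₁ Q R → ∃ Q' ∈ P₂, ∃ R' ∈ P₂, Q ⊆ Q' ∧ R ⊆ R' ∧ le₂ Q' R'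

/-- The relation on states induced by a partition-relation pair. -/
def IndRel (P : Set (Set S)) (le : Set S → Set S → Prop) (p q : S) : Prop :=
  ∃ Q ∈ P, ∃ R ∈ P, le Q R ∧ p ∈ Q ∧ q ∈ R

/-- Equivalence classes of the equivalence kernel R ∩ R⁻¹ of a preorder R. -/
def eqClasses (R : S → S → Prop) : Set (Set S) :=
  {C | ∃ p, C = {q | R p q ∧ R q p}}

/-- The class order induced by a preorder R on its equivalence classes. -/
def classLe (R : S → S → Prop) (Q T : Set S) : Prop :=
  Q ∈ eqClasses R ∧ T ∈ eqClasses R ∧ ∃ p ∈ Q, ∃ q ∈ T, R p q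

/-- The little brother relation ≤' induced on a parent partition P'. -/
def IndLe (le : Set S → Set S → Prop) (P' : Set (Set S)) (Q' R' : Set S) : Prop :=
  Q' ∈ P' ∧ R' ∈ P' ∧ ∃ Q R, le Q R ∧ Q ⊆ Q' ∧ R ⊆ R'

/-- bb'(R') with respect to a parent partition. -/
def bigBro' (le : Set S → Set S → Prop) (P' : Set (Set S)) (R' : Set S) : Set S :=
  {x | ∃ Q' ∈ P', IndLe le P' R' Q' ∧ x ∈ Q'}

/-- lb'(R') with respect to a parent partition. -/
def litBro' (le : Set S → Set S → Prop) (P' : Set (Set S)) (R' : Set S) : Set S :=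
  {x | ∃ Q' ∈ P', IndLe le P' Q' R' ∧ x ∈ Q'}

/-- Stability conditions 1-4 of (P, le) with respect to a parent partition P'. -/
def StableWrt (tm : S → Prop) (tr : S → A → S → Prop) (B : Set A)
    (P : Set (Set S)) (le : Set S → Set S → Prop) (P' : Set (Set S)) : Prop :=
  (∀ Q ∈ P, ∀ a, ∀ R' ∈ P', ExTr tr a Q R' → AllTr tr a Q (bigBro' le P' R')) ∧
  (∀ Q ∈ P, ∀ b ∈ B, ∀ R' ∈ P', ExTr tr b Q R' → AllTr tr b Q (litBro' le P' R')) ∧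
  (∀ Q T, le Q T → ∀ a, ∀ R' ∈ P', AllTr tr a Q R' → AllTr tr a T (bigBro' le P' R')) ∧
  (∀ Q T, le Q T → ∀ b ∈ B, ∀ R' ∈ P', AllTr tr b T R' → AllTr tr b Q (litBro' le P' R'))

/-- P' is a parent partition of P. -/
def IsParent (P P' : Set (Set S)) : Prop :=
  IsPartition' P' ∧ ∀ Q ∈ P, ∃ Q' ∈ P', Q ⊆ Q'

/-- The partition obtained by splitting the class P₀ of P' into S' and P₀ \ S'. -/
def splitPart (P' : Set (Set S)) (P₀ Sp : Set S) : Set (Set S) :=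
  (P' \ {P₀}) ∪ {Sp, P₀ \ Sp}

/-- Some le-related pair of classes lies inside (X, Y). -/
def relBetween (le : Set S → Set S → Prop) (X Y : Set S) : Prop :=
  ∃ Q R, le Q R ∧ Q ⊆ X ∧ R ⊆ Y

/-- Sp is a splitter of the class P₀ of the parent partition P' with respect to P. -/
def IsSplitter (P : Set (Set S)) (le : Set S → Set S → Prop)
    (P' : Set (Set S)) (P₀ Sp : Set S) : Prop :=
  P₀ ∈ P' ∧ Sp ⊆ P₀ ∧ Sp.Nonempty ∧ (P₀ \ Sp).Nonempty ∧
  (∀ Q ∈ P, Q ⊆ Sp ∨ Q ∩ Sp = ∅) ∧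
  (relBetween le Sp (P₀ \ Sp) ∨
    (¬ relBetween le Sp (P₀ \ Sp) ∧ ¬ relBetween le (P₀ \ Sp) Sp))

/-- (Pr, ler) is the result Refine(P, le, P', Sp): the ◁-coarsest pair ◁-below (P, le)
stable with respect to the split parent partition. -/
def IsRefineOf (tm : S → Prop) (tr : S → A → S → Prop) (B : Set A)
    (P : Set (Set S)) (le : Set S → Set S → Prop)
    (P' : Set (Set S)) (P₀ Sp : Set S)
    (Pr : Set (Set S)) (ler : Set S → Set S → Prop) : Prop :=
  IsPRP Pr ler ∧ Lhd Pr ler P le ∧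
  StableWrt tm tr B Pr ler (splitPart P' P₀ Sp) ∧
  ∀ Q lq, IsPRP Q lq → Lhd Q lq P le →
    StableWrt tm tr B Q lq (splitPart P' P₀ Sp) → Lhd Q lq Pr ler

lemma pble_refl (tm : S → Prop) (tr : S → A → S → Prop) (B : Set A) (p : S) :
    PbLe tm tr B p p := by
  refine ⟨fun x y => x = y, ?_, rfl⟩
  rintro x y rfl
  exact ⟨id, fun a p' h => ⟨p', h, rfl⟩, fun b q' _ h => ⟨q', h, rfl⟩⟩

lemma pble_trans (tm : S → Prop) (tr : S → A → S → Prop) (B : Set A) {p q r : S}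
    (h1 : PbLe tm tr B p q) (h2 : PbLe tm tr B q r) : PbLe tm tr B p r := by
  obtain ⟨R1, hR1, hpq⟩ := h1
  obtain ⟨R2, hR2, hqr⟩ := h2
  refine ⟨fun x z => ∃ y, R1 x y ∧ R2 y z, ?_, q, hpq, hqr⟩
  rintro x z ⟨y, hxy, hyz⟩
  obtain ⟨t1, f1, b1⟩ := hR1 x y hxy
  obtain ⟨t2, f2, b2⟩ := hR2 y z hyz
  refine ⟨fun h => t2 (t1 h), ?_, ?_⟩
  · intro a x' hx
    obtain ⟨y', hy, h1'⟩ := f1 a x' hx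
    obtain ⟨z', hz, h2'⟩ := f2 a y' hy
    exact ⟨z', hz, y', h1', h2'⟩
  · intro b z' hb hz
    obtain ⟨y', hy, h2'⟩ := b2 b z' hb hz
    obtain ⟨x', hx, h1'⟩ := b1 b y' hb hy
    exact ⟨x', hx, y', h1', h2'⟩

lemma mem_class (tm : S → Prop) (tr : S → A → S → Prop) (B : Set A) (x : S) :
    x ∈ ({q | PbLe tm tr B x q ∧ PbLe tm tr B q x} : Set S) :=
  ⟨pble_refl tm tr B x, pble_refl tm tr B x⟩

/-- instantiation of stability conditions c and d for the canonical
partition-relation pair induced by partial bisimilarity. -/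
theorem canonical_stability (tm : S → Prop) (tr : S → A → S → Prop) (B : Set A)
    (P Q R : Set S) (a : A)
    (hP : P ∈ eqClasses (PbLe tm tr B))
    (hQ : Q ∈ eqClasses (PbLe tm tr B))
    (hR : R ∈ eqClasses (PbLe tm tr B))
    (hle : classLe (PbLe tm tr B) P Q)
    (hex : ExTr tr a Q R) :
    AllTr tr a Q (bigBro (eqClasses (PbLe tm tr B)) (classLe (PbLe tm tr B)) R) ∧
    (a ∈ B → AllTr tr a P (litBro (eqClasses (PbLe tm tr B)) (classLe (PbLe tm tr B)) R)) := by
  obtain ⟨p₀, hPdef⟩ := hP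
  obtain ⟨q₀, hQdef⟩ := hQ
  obtain ⟨r₀, hRdef⟩ := hR
  obtain ⟨q₁, hq₁, r₁, hr₁, hq₁tr⟩ := hex
  -- From class memberships extract PbLe facts
  have hq₁' : PbLe tm tr B q₀ q₁ ∧ PbLe tm tr B q₁ q₀ := by rw [hQdef] at hq₁; exact hq₁
  have hr₁' : PbLe tm tr B r₀ r₁ ∧ PbLe tm tr B r₁ r₀ := by rw [hRdef] at hr₁; exact hr₁
  obtain ⟨-, -, p₂, hp₂, q₂, hq₂, hpq⟩ := hle
  have hp₂' : PbLe tm tr B p₀ p₂ ∧ PbLe tm tr B p₂ p₀ := by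
    rw [hPdef] at hp₂; exact hp₂
  have hq₂' : PbLe tm tr B q₀ q₂ ∧ PbLe tm tr B q₂ q₀ := by rw [hQdef] at hq₂; exact hq₂
  constructor
  · intro q hq
    have hq' : PbLe tm tr B q₀ q ∧ PbLe tm tr B q q₀ := by rw [hQdef] at hq; exact hq
    -- q₁ ≤ q
    have hle1 : PbLe tm tr B q₁ q := pble_trans tm tr B hq₁'.2 hq'.1
    obtain ⟨Rel, hRel, hq₁q⟩ := hle1
    obtain ⟨-, fwd, -⟩ := hRel q₁ q hq₁q
    obtain ⟨x, hx, hr₁x⟩ := fwd a r₁ hq₁tr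
    have hr₁x' : PbLe tm tr B r₁ x := ⟨Rel, hRel, hr₁x⟩
    refine ⟨x, ?_, hx⟩
    refine ⟨{y | PbLe tm tr B x y ∧ PbLe tm tr B y x}, ⟨x, rfl⟩, ?_, mem_class tm tr B x⟩
    refine ⟨⟨r₀, hRdef⟩, ⟨x, rfl⟩, r₁, hr₁, x, mem_class tm tr B x,
      pble_trans tm tr B hr₁'.2 (pble_trans tm tr B hr₁'.1 hr₁x')⟩
  · intro hB p hp
    have hp' : PbLe tm tr B p₀ p ∧ PbLe tm tr B p p₀ := by rw [hPdef] at hp; exact hp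
    have hle1 : PbLe tm tr B p q₁ :=
      pble_trans tm tr B hp'.2 (pble_trans tm tr B hp₂'.1
        (pble_trans tm tr B hpq (pble_trans tm tr B hq₂'.2 hq₁'.1)))
    obtain ⟨Rel, hRel, hpq₁⟩ := hle1
    obtain ⟨-, -, bwd⟩ := hRel p q₁ hpq₁
    obtain ⟨x, hx, hxr₁⟩ := bwd a r₁ hB hq₁tr
    have hxr₁' : PbLe tm tr B x r₁ := ⟨Rel, hRel, hxr₁⟩
    refine ⟨x, ?_, hx⟩
    refine ⟨{y | PbLe tm tr B x y ∧ PbLe tm tr B y x}, ⟨x, rfl⟩, ?_, mem_class tm tr B x⟩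
    exact ⟨⟨x, rfl⟩, ⟨r₀, hRdef⟩, x, mem_class tm tr B x, r₁, hr₁, hxr₁'⟩
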